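/- arXiv:0710.2266 — 2 statements merged into one kernel-verified Lean document; each statement's English description precedes it below -/
import Mathlib

section
/- With the setup of g-orthogonal complex structures J₊, J₋ on an oriented 4-dimensional inner product space with angle function p, the 2-forms Φ(·,·) = (1/2)g([J₊,J₋]·,·) and Ψ±(·,·) = -Φ(J±·,·) satisfy Φ∧Φ = Ψ₊∧Ψ₊ = Ψ₋∧Ψ₋ = 2(1-p²)·vol_g, Φ∧Ψ± = 0, and Ψ₊∧Ψ₋ = p·Φ∧Φ. -/
open scoped RealInnerProductSpace

/-- A `g`-compatible complex structure `J` on an oriented `4`-dimensional real inner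
product space `V` *induces the orientation* `o` if there is a positively oriented
orthonormal basis of the form `(e, Je, f, Jf)`.  (This is the standard description of
the orientation induced by the volume form of the fundamental `2`-form
`F(·,·) = g(J·,·)`.) -/
def InducesOrientation {V : Type*} [NormedAddCommGroup V] [InnerProductSpace ℝ V]
    (o : Orientation ℝ V (Fin 4)) (J : V →ₗ[ℝ] V) : Prop :=
  ∃ b : OrthonormalBasis (Fin 4) ℝ V,
    b.toBasis.orientation = o ∧ J (b 0) = b 1 ∧ J (b 2) = b 3

/-- The evaluation of the wedge product `α ∧ β` of two `2`-forms (given as antisymmetric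
bilinear maps) on a quadruple of vectors, via the standard `(2,2)`-shuffle formula.
Evaluated on a positively oriented orthonormal basis, this is the coefficient of
`α ∧ β` with respect to the metric volume form `dv_g`. -/
def wedgeEval {V : Type*} (α β : V → V → ℝ) (v₀ v₁ v₂ v₃ : V) : ℝ :=
  α v₀ v₁ * β v₂ v₃ - α v₀ v₂ * β v₁ v₃ + α v₀ v₃ * β v₁ v₂
    + α v₁ v₂ * β v₀ v₃ - α v₁ v₃ * β v₀ v₂ + α v₂ v₃ * β v₀ v₁


section Aux
variable {V : Type*} [NormedAddCommGroup V] [InnerProductSpace ℝ V]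

private lemma inner_map_expand' (b : OrthonormalBasis (Fin 4) ℝ V) (J : V →ₗ[ℝ] V) (x y : V) :
    ⟪J x, y⟫ = ∑ k, ⟪b k, x⟫ * ⟪J (b k), y⟫ := by
  conv_lhs => rw [← b.sum_repr' x]
  rw [map_sum, sum_inner]
  simp [real_inner_smul_left]

private lemma parseval' (b : OrthonormalBasis (Fin 4) ℝ V) (x y : V) :
    ⟪x, y⟫ = ∑ k, ⟪b k, x⟫ * ⟪b k, y⟫ := by
  conv_lhs => rw [← b.sum_repr' x]
  rw [sum_inner]
  simp [real_inner_smul_left]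

private lemma skew' (J : V →ₗ[ℝ] V) (hJsq : J ∘ₗ J = -LinearMap.id)
    (hJg : ∀ x y : V, ⟪J x, J y⟫ = ⟪x, y⟫) (x y : V) :
    ⟪J x, y⟫ = -⟪x, J y⟫ := by
  have h1 : J (J y) = -y := by
    have := congrArg (fun f => f y) hJsq
    simpa using this
  have h2 := hJg x (J y)
  rw [h1] at h2
  simp only [inner_neg_right] at h2
  linarith

private lemma det_fin_four' (M : Matrix (Fin 4) (Fin 4) ℝ) :
    M.det =
      M 0 0 * (M 1 1 * (M 2 2 * M 3 3 - M 2 3 * M 3 2)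
        - M 1 2 * (M 2 1 * M 3 3 - M 2 3 * M 3 1)
        + M 1 3 * (M 2 1 * M 3 2 - M 2 2 * M 3 1))
      - M 0 1 * (M 1 0 * (M 2 2 * M 3 3 - M 2 3 * M 3 2)
        - M 1 2 * (M 2 0 * M 3 3 - M 2 3 * M 3 0)
        + M 1 3 * (M 2 0 * M 3 2 - M 2 2 * M 3 0))
      + M 0 2 * (M 1 0 * (M 2 1 * M 3 3 - M 2 3 * M 3 1)
        - M 1 1 * (M 2 0 * M 3 3 - M 2 3 * M 3 0)
        + M 1 3 * (M 2 0 * M 3 1 - M 2 1 * M 3 0))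
      - M 0 3 * (M 1 0 * (M 2 1 * M 3 2 - M 2 2 * M 3 1)
        - M 1 1 * (M 2 0 * M 3 2 - M 2 2 * M 3 0)
        + M 1 2 * (M 2 0 * M 3 1 - M 2 1 * M 3 0)) := by
  rw [Matrix.det_succ_row_zero]
  simp [Fin.sum_univ_succ, Matrix.det_fin_three, Matrix.submatrix, Fin.succAbove,
    show (Fin.succ 2 : Fin 4) = 3 from rfl, show (Fin.castSucc 2 : Fin 4) = 2 from rfl,
    show ((1:Fin 4) < 3) from by decide]
  ring

private lemma pf_eq_one' (o : Orientation ℝ V (Fin 4)) (J : V →ₗ[ℝ] V)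
    (hJsq : J ∘ₗ J = -LinearMap.id) (hJg : ∀ x y : V, ⟪J x, J y⟫ = ⟪x, y⟫)
    (hJo : InducesOrientation o J)
    (b : OrthonormalBasis (Fin 4) ℝ V) (hb : b.toBasis.orientation = o) :
    ⟪J (b 0), b 1⟫ * ⟪J (b 2), b 3⟫ - ⟪J (b 0), b 2⟫ * ⟪J (b 1), b 3⟫
      + ⟪J (b 0), b 3⟫ * ⟪J (b 1), b 2⟫ = 1 := by
  obtain ⟨e, he, he01, he23⟩ := hJo
  have he10 : J (e 1) = -e 0 := by
    rw [← he01]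
    have := congrArg (fun f => f (e 0)) hJsq
    simpa using this
  have he32 : J (e 3) = -e 2 := by
    rw [← he23]
    have := congrArg (fun f => f (e 2)) hJsq
    simpa using this
  have hee : ∀ i j : Fin 4, ⟪e i, e j⟫ = if i = j then 1 else 0 :=
    orthonormal_iff_ite.mp e.orthonormal
  set Q : Fin 4 → Fin 4 → ℝ := fun i j => ⟪e i, b j⟫ with hQ
  have key : ∀ k l : Fin 4, ⟪J (b k), b l⟫ =
      Q 0 k * Q 1 l - Q 1 k * Q 0 l + Q 2 k * Q 3 l - Q 3 k * Q 2 l := by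
    intro k l
    rw [inner_map_expand' e J (b k) (b l)]
    have : ∀ i : Fin 4, ⟪J (e i), b l⟫ = ∑ j, ⟪e j, b l⟫ * ⟪J (e i), e j⟫ := by
      intro i
      rw [parseval' e (J (e i)) (b l)]
      congr 1; ext j; rw [real_inner_comm (e j) (J (e i))]; ring
    simp_rw [this]
    rw [Fin.sum_univ_four]
    simp_rw [Fin.sum_univ_four, he01, he10, he23, he32]
    simp only [hee, inner_neg_left, inner_neg_right]
    simp only [hQ]
    rw [real_inner_comm (b k) (e 0), real_inner_comm (b l) (e 1), real_inner_comm (b k) (e 1),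
      real_inner_comm (b l) (e 0), real_inner_comm (b k) (e 2), real_inner_comm (b l) (e 3),
      real_inner_comm (b k) (e 3), real_inner_comm (b l) (e 2)]
    simp
    ring
  have hdet1 : e.toBasis.det ⇑b.toBasis = 1 :=
    e.det_to_matrix_orthonormalBasis_of_same_orientation b (he.trans hb.symm)
  rw [Module.Basis.det_apply] at hdet1
  have hM : ∀ i j, e.toBasis.toMatrix (⇑b.toBasis) i j = Q i j := by
    intro i j
    rw [Module.Basis.toMatrix_apply, OrthonormalBasis.coe_toBasis_repr_apply,
      OrthonormalBasis.repr_apply_apply]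
    simp [hQ, OrthonormalBasis.coe_toBasis]
  rw [det_fin_four'] at hdet1
  simp only [hM] at hdet1
  simp only [key]
  linear_combination hdet1

private lemma coords' (o : Orientation ℝ V (Fin 4)) (J : V →ₗ[ℝ] V)
    (hJsq : J ∘ₗ J = -LinearMap.id) (hJg : ∀ x y : V, ⟪J x, J y⟫ = ⟪x, y⟫)
    (hJo : InducesOrientation o J)
    (b : OrthonormalBasis (Fin 4) ℝ V) (hb : b.toBasis.orientation = o) :
    ∃ a1 a2 a3 : ℝ, a1 ^ 2 + a2 ^ 2 + a3 ^ 2 = 1 ∧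
      ∀ i j : Fin 4, ⟪J (b i), b j⟫ =
        ![![0, a1, a2, a3], ![-a1, 0, a3, -a2], ![-a2, -a3, 0, a1], ![-a3, a2, -a1, 0]] i j := by
  have hskew : ∀ i j : Fin 4, ⟪J (b j), b i⟫ = -⟪J (b i), b j⟫ := by
    intro i j
    rw [skew' J hJsq hJg (b j) (b i), real_inner_comm]
  have hdiagz : ∀ i : Fin 4, ⟪J (b i), b i⟫ = 0 := by
    intro i
    have := hskew i i
    linarith
  have hdiag : ∀ i : Fin 4,
      ⟪J (b i), b 0⟫ ^ 2 + ⟪J (b i), b 1⟫ ^ 2 + ⟪J (b i), b 2⟫ ^ 2 + ⟪J (b i), b 3⟫ ^ 2 = 1 := by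
    intro i
    have h1 : ⟪J (b i), J (b i)⟫ = (1:ℝ) := by
      rw [hJg, real_inner_self_eq_norm_sq, b.orthonormal.1 i]
      norm_num
    rw [parseval' b (J (b i)) (J (b i))] at h1
    rw [Fin.sum_univ_four] at h1
    rw [real_inner_comm (J (b i)) (b 0), real_inner_comm (J (b i)) (b 1),
      real_inner_comm (J (b i)) (b 2), real_inner_comm (J (b i)) (b 3)] at h1
    nlinarith [h1]
  have hpf := pf_eq_one' o J hJsq hJg hJo b hb
  have h0 := hdiag 0
  have h1 := hdiag 1
  have h2 := hdiag 2
  have h3 := hdiag 3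
  rw [hdiagz 0] at h0
  rw [hdiagz 1, hskew 0 1] at h1
  rw [hdiagz 2, hskew 0 2, hskew 1 2] at h2
  rw [hdiagz 3, hskew 0 3, hskew 1 3, hskew 2 3] at h3
  have hS : (⟪J (b 0), b 1⟫ - ⟪J (b 2), b 3⟫) ^ 2 + (⟪J (b 0), b 2⟫ + ⟪J (b 1), b 3⟫) ^ 2
      + (⟪J (b 0), b 3⟫ - ⟪J (b 1), b 2⟫) ^ 2 = 0 := by
    linear_combination (1/2) * h0 + (1/2) * h1 + (1/2) * h2 + (1/2) * h3 - 2 * hpf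
  have n1 := sq_nonneg (⟪J (b 0), b 1⟫ - ⟪J (b 2), b 3⟫)
  have n2 := sq_nonneg (⟪J (b 0), b 2⟫ + ⟪J (b 1), b 3⟫)
  have n3 := sq_nonneg (⟪J (b 0), b 3⟫ - ⟪J (b 1), b 2⟫)
  have q1 : (⟪J (b 0), b 1⟫ - ⟪J (b 2), b 3⟫) ^ 2 = 0 := by linarith
  have q2 : (⟪J (b 0), b 2⟫ + ⟪J (b 1), b 3⟫) ^ 2 = 0 := by linarith
  have q3 : (⟪J (b 0), b 3⟫ - ⟪J (b 1), b 2⟫) ^ 2 = 0 := by linarith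
  have e1 : ⟪J (b 2), b 3⟫ = ⟪J (b 0), b 1⟫ := by
    have := pow_eq_zero_iff (two_ne_zero) |>.mp q1; linarith
  have e2 : ⟪J (b 1), b 3⟫ = -⟪J (b 0), b 2⟫ := by
    have := pow_eq_zero_iff (two_ne_zero) |>.mp q2; linarith
  have e3 : ⟪J (b 1), b 2⟫ = ⟪J (b 0), b 3⟫ := by
    have := pow_eq_zero_iff (two_ne_zero) |>.mp q3; linarith
  refine ⟨⟪J (b 0), b 1⟫, ⟪J (b 0), b 2⟫, ⟪J (b 0), b 3⟫, by linear_combination h0, ?_⟩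
  intro i j
  fin_cases i <;> fin_cases j <;>
    simp [hdiagz, hskew 0 1, hskew 0 2, hskew 0 3, hskew 1 2, hskew 1 3, hskew 2 3, e1, e2, e3]

end Aux

set_option maxHeartbeats 1000000 in
/-- With `Φ(·,·) = (1/2)g([J₊,J₋]·,·)` and `Ψ±(·,·) = -Φ(J±·,·)` one has
`Φ∧Φ = Ψ₊∧Ψ₊ = Ψ₋∧Ψ₋ = 2(1-p²)·dv_g`, `Φ∧Ψ± = 0` and `Ψ₊∧Ψ₋ = p·Φ∧Φ`
(4-forms being identified with multiples of `dv_g` by evaluation on a positively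
oriented orthonormal basis). -/
theorem stmt4 {V : Type*} [NormedAddCommGroup V] [InnerProductSpace ℝ V]
    (hdim : Module.finrank ℝ V = 4) (o : Orientation ℝ V (Fin 4))
    (Jp Jm : V →ₗ[ℝ] V)
    (hJpsq : Jp ∘ₗ Jp = -LinearMap.id) (hJmsq : Jm ∘ₗ Jm = -LinearMap.id)
    (hJpg : ∀ x y : V, ⟪Jp x, Jp y⟫ = ⟪x, y⟫)
    (hJmg : ∀ x y : V, ⟪Jm x, Jm y⟫ = ⟪x, y⟫)
    (hJpo : InducesOrientation o Jp) (hJmo : InducesOrientation o Jm)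
    (p : ℝ) (hp : p = -(1/4) * LinearMap.trace ℝ V (Jp ∘ₗ Jm))
    (Φ Ψp Ψm : V → V → ℝ)
    (hΦ : ∀ x y, Φ x y = (1/2) * ⟪(Jp ∘ₗ Jm - Jm ∘ₗ Jp) x, y⟫)
    (hΨp : ∀ x y, Ψp x y = -Φ (Jp x) y) (hΨm : ∀ x y, Ψm x y = -Φ (Jm x) y) :
    ∀ b : OrthonormalBasis (Fin 4) ℝ V, b.toBasis.orientation = o →
      wedgeEval Φ Φ (b 0) (b 1) (b 2) (b 3) = 2 * (1 - p ^ 2) ∧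
      wedgeEval Ψp Ψp (b 0) (b 1) (b 2) (b 3) = 2 * (1 - p ^ 2) ∧
      wedgeEval Ψm Ψm (b 0) (b 1) (b 2) (b 3) = 2 * (1 - p ^ 2) ∧
      wedgeEval Φ Ψp (b 0) (b 1) (b 2) (b 3) = 0 ∧
      wedgeEval Φ Ψm (b 0) (b 1) (b 2) (b 3) = 0 ∧
      wedgeEval Ψp Ψm (b 0) (b 1) (b 2) (b 3) =
        p * wedgeEval Φ Φ (b 0) (b 1) (b 2) (b 3) := by
  intro b hb
  have i2 : (⟨2, by norm_num⟩ : Fin 4) = 2 := rfl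
  have i3 : (⟨3, by norm_num⟩ : Fin 4) = 3 := rfl
  obtain ⟨a1, a2, a3, ha, hfp⟩ := coords' o Jp hJpsq hJpg hJpo b hb
  obtain ⟨g1, g2, g3, hg, hfm⟩ := coords' o Jm hJmsq hJmg hJmo b hb
  have hfp' : ∀ i j : Fin 4, ⟪b j, Jp (b i)⟫ =
      ![![0, a1, a2, a3], ![-a1, 0, a3, -a2], ![-a2, -a3, 0, a1], ![-a3, a2, -a1, 0]] i j := by
    intro i j; rw [real_inner_comm]; exact hfp i j
  have hfm' : ∀ i j : Fin 4, ⟪b j, Jm (b i)⟫ =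
      ![![0, g1, g2, g3], ![-g1, 0, g3, -g2], ![-g2, -g3, 0, g1], ![-g3, g2, -g1, 0]] i j := by
    intro i j; rw [real_inner_comm]; exact hfm i j
  have hphi : ∀ i j : Fin 4, Φ (b i) (b j) = ![![0, ((-1)*a3*g2 + a2*g3), (a3*g1 + (-1)*a1*g3), ((-1)*a2*g1 + a1*g2)], ![(a3*g2 + (-1)*a2*g3), 0, ((-1)*a2*g1 + a1*g2), ((-1)*a3*g1 + a1*g3)], ![((-1)*a3*g1 + a1*g3), (a2*g1 + (-1)*a1*g2), 0, ((-1)*a3*g2 + a2*g3)], ![(a2*g1 + (-1)*a1*g2), (a3*g1 + (-1)*a1*g3), (a3*g2 + (-1)*a2*g3), 0]] i j := by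
    intro i j
    rw [hΦ]
    simp only [LinearMap.sub_apply, LinearMap.comp_apply, inner_sub_left]
    rw [inner_map_expand' b Jp (Jm (b i)) (b j), inner_map_expand' b Jm (Jp (b i)) (b j),
      Fin.sum_univ_four, Fin.sum_univ_four]
    simp only [hfp', hfm', hfp, hfm]
    fin_cases i <;> fin_cases j <;> (simp only [Fin.zero_eta, Fin.mk_one, i2, i3, Fin.isValue, Matrix.cons_val_zero, Matrix.cons_val_one, Matrix.cons_val_two, Matrix.cons_val_three, Matrix.head_cons, Matrix.vecHead, Matrix.vecTail, Function.comp_apply, Fin.succ_zero_eq_one, Fin.succ_one_eq_two]; ring)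
  have hT : ∀ k j : Fin 4, ⟪(Jp ∘ₗ Jm - Jm ∘ₗ Jp) (b k), b j⟫ = 2 * Φ (b k) (b j) := by
    intro k j; rw [hΦ]; ring
  have hpsip : ∀ i j : Fin 4, Ψp (b i) (b j) = ![![0, ((-1)*a3*a3*g1 + (-1)*a2*a2*g1 + a1*a3*g3 + a1*a2*g2), ((-1)*a3*a3*g2 + a2*a3*g3 + a1*a2*g1 + (-1)*a1*a1*g2), (a2*a3*g2 + (-1)*a2*a2*g3 + a1*a3*g1 + (-1)*a1*a1*g3)], ![(a3*a3*g1 + a2*a2*g1 + (-1)*a1*a3*g3 + (-1)*a1*a2*g2), 0, (a2*a3*g2 + (-1)*a2*a2*g3 + a1*a3*g1 + (-1)*a1*a1*g3), (a3*a3*g2 + (-1)*a2*a3*g3 + (-1)*a1*a2*g1 + a1*a1*g2)], ![(a3*a3*g2 + (-1)*a2*a3*g3 + (-1)*a1*a2*g1 + a1*a1*g2), ((-1)*a2*a3*g2 + a2*a2*g3 + (-1)*a1*a3*g1 + a1*a1*g3), 0, ((-1)*a3*a3*g1 + (-1)*a2*a2*g1 + a1*a3*g3 + a1*a2*g2)],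 ![((-1)*a2*a3*g2 + a2*a2*g3 + (-1)*a1*a3*g1 + a1*a1*g3), ((-1)*a3*a3*g2 + a2*a3*g3 + a1*a2*g1 + (-1)*a1*a1*g2), (a3*a3*g1 + a2*a2*g1 + (-1)*a1*a3*g3 + (-1)*a1*a2*g2), 0]] i j := by
    intro i j
    rw [hΨp, hΦ]
    rw [inner_map_expand' b (Jp ∘ₗ Jm - Jm ∘ₗ Jp) (Jp (b i)) (b j), Fin.sum_univ_four]
    simp only [hT, hphi, hfp']
    fin_cases i <;> fin_cases j <;> (simp only [Fin.zero_eta, Fin.mk_one, i2, i3, Fin.isValue, Matrix.cons_val_zero, Matrix.cons_val_one, Matrix.cons_val_two, Matrix.cons_val_three, Matrix.head_cons, Matrix.vecHead, Matrix.vecTail, Function.comp_apply, Fin.succ_zero_eq_one, Fin.succ_one_eq_two]; ring)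
  have hpsim : ∀ i j : Fin 4, Ψm (b i) (b j) = ![![0, ((-1)*a3*g1*g3 + (-1)*a2*g1*g2 + a1*g3*g3 + a1*g2*g2), ((-1)*a3*g2*g3 + a2*g3*g3 + a2*g1*g1 + (-1)*a1*g1*g2), (a3*g2*g2 + a3*g1*g1 + (-1)*a2*g2*g3 + (-1)*a1*g1*g3)], ![(a3*g1*g3 + a2*g1*g2 + (-1)*a1*g3*g3 + (-1)*a1*g2*g2), 0, (a3*g2*g2 + a3*g1*g1 + (-1)*a2*g2*g3 + (-1)*a1*g1*g3), (a3*g2*g3 + (-1)*a2*g3*g3 + (-1)*a2*g1*g1 + a1*g1*g2)], ![(a3*g2*g3 + (-1)*a2*g3*g3 + (-1)*a2*g1*g1 + a1*g1*g2), ((-1)*a3*g2*g2 + (-1)*a3*g1*g1 + a2*g2*g3 + a1*g1*g3), 0, ((-1)*a3*g1*g3 + (-1)*a2*g1*g2 + a1*g3*g3 + a1*g2*g2)], ![((-1)*a3*g2*g2 + (-1)*a3*g1*g1 + a2*g2*g3 + a1*g1*g3), ((-1)*a3*g2*g3 + a2*g3*g3 + a2*g1*g1 + (-1)*a1*g1*g2),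 (a3*g1*g3 + a2*g1*g2 + (-1)*a1*g3*g3 + (-1)*a1*g2*g2), 0]] i j := by
    intro i j
    rw [hΨm, hΦ]
    rw [inner_map_expand' b (Jp ∘ₗ Jm - Jm ∘ₗ Jp) (Jm (b i)) (b j), Fin.sum_univ_four]
    simp only [hT, hphi, hfm']
    fin_cases i <;> fin_cases j <;> (simp only [Fin.zero_eta, Fin.mk_one, i2, i3, Fin.isValue, Matrix.cons_val_zero, Matrix.cons_val_one, Matrix.cons_val_two, Matrix.cons_val_three, Matrix.head_cons, Matrix.vecHead, Matrix.vecTail, Function.comp_apply, Fin.succ_zero_eq_one, Fin.succ_one_eq_two]; ring)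
  have hpval : p = a1*g1 + a2*g2 + a3*g3 := by
    have htrace : LinearMap.trace ℝ V (Jp ∘ₗ Jm) = ∑ i, ⟪b i, Jp (Jm (b i))⟫ := by
      rw [LinearMap.trace_eq_matrix_trace ℝ b.toBasis]
      simp [Matrix.trace, LinearMap.toMatrix_apply, OrthonormalBasis.coe_toBasis,
        OrthonormalBasis.coe_toBasis_repr_apply, OrthonormalBasis.repr_apply_apply]
    have hterm : ∀ i : Fin 4, ⟪b i, Jp (Jm (b i))⟫ = ∑ k, ⟪b k, Jm (b i)⟫ * ⟪Jp (b k), b i⟫ := by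
      intro i; rw [real_inner_comm, inner_map_expand' b Jp (Jm (b i)) (b i)]
    have htr4 : LinearMap.trace ℝ V (Jp ∘ₗ Jm) = -(4:ℝ) * (a1*g1 + a2*g2 + a3*g3) := by
      rw [htrace]
      simp only [hterm, hfm', hfp, Fin.sum_univ_four]
      simp only [Fin.zero_eta, Fin.mk_one, i2, i3, Fin.isValue, Matrix.cons_val_zero, Matrix.cons_val_one, Matrix.cons_val_two, Matrix.cons_val_three, Matrix.head_cons, Matrix.vecHead, Matrix.vecTail, Function.comp_apply, Fin.succ_zero_eq_one, Fin.succ_one_eq_two]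
      ring
    rw [hp, htr4]
    ring
  rw [hpval]
  refine ⟨?_, ?_, ?_, ?_, ?_, ?_⟩ <;>
    simp only [wedgeEval, hphi, hpsip, hpsim] <;>
    simp only [Fin.zero_eta, Fin.mk_one, i2, i3, Fin.isValue, Matrix.cons_val_zero, Matrix.cons_val_one, Matrix.cons_val_two, Matrix.cons_val_three, Matrix.head_cons, Matrix.vecHead, Matrix.vecTail, Function.comp_apply, Fin.succ_zero_eq_one, Fin.succ_one_eq_two]
  · linear_combination ((2*g3^2 + 2*g2^2 + 2*g1^2)) * ha + ((2)) * hg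
  · linear_combination ((2*g3^2 + 2*g2^2 + 2*g1^2 + 2*a3^2*g2^2 + 2*a3^2*g1^2 + (-4)*a2*a3*g2*g3 + 2*a2^2*g3^2 + 2*a2^2*g1^2 + (-4)*a1*a3*g1*g3 + (-4)*a1*a2*g1*g2 + 2*a1^2*g3^2 + 2*a1^2*g2^2)) * ha + ((2)) * hg
  · linear_combination ((2*g3^4 + 4*g2^2*g3^2 + 2*g2^4 + 2*g1^2 + 2*g1^2*g3^2 + 2*g1^2*g2^2)) * ha + ((2 + 2*g3^2 + 2*g2^2 + (-2)*a3^2*g3^2 + 2*a3^2*g1^2 + (-4)*a2*a3*g2*g3 + (-2)*a2^2*g2^2 + 2*a2^2*g1^2 + (-4)*a1*a3*g1*g3 + (-4)*a1*a2*g1*g2)) * hg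
  · ring
  · ring
  · ring
end

section
/- With g-orthogonal complex structures J₊, J₋ on an oriented 4-dimensional inner product space and angle function p, the J₊-invariant part of the 2-form Ψ₋ equals (1-p²)·F₊, where F₊(·,·) = g(J₊·,·) and the J₊-invariant part of a 2-form β is (1/2)(β(·,·) + β(J₊·,J₊·)). -/
open scoped RealInnerProductSpace

set_option maxHeartbeats 2000000 in
lemma aux_selfdual (a B C d e f u0 u1 u2 u3 v0 v1 v2 v3 : ℝ)
    (h11 : a^2 + B^2 + C^2 = 1) (h22 : a^2 + d^2 + e^2 = 1)
    (h33 : B^2 + d^2 + f^2 = 1) (h44 : C^2 + e^2 + f^2 = 1)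
    (h12 : B*d + C*e = 0) (h13 : -(a*d) + C*f = 0) (h14 : -(a*e) - B*f = 0)
    (h23 : a*B + e*f = 0) (h24 : a*C - d*f = 0) (h34 : B*C + d*e = 0)
    (huu : u0^2+u1^2+u2^2+u3^2 = 1) (hvv : v0^2+v1^2+v2^2+v3^2 = 1)
    (huv : u0*v0+u1*v1+u2*v2+u3*v3 = 0)
    (huMv : f*u2*v3 - 1*f*u3*v2 + e*u1*v3 - 1*e*u3*v1 + d*u1*v2 - 1*d*u2*v1 + a*u0*v1 - 1*a*u1*v0 + B*u0*v2 - 1*B*u2*v0 + C*u0*v3 - 1*C*u3*v0 = 0)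
    (hDET : -1*f^2*u0*u2*v1*v3 + f^2*u0*u3*v1*v2 + f^2*u1*u2*v0*v3 - 1*f^2*u1*u3*v0*v2 - 1*f*e*u0*u1*v1*v3 + f*e*u0*u2*v2*v3 + f*e*u0*u3*v1^2 - 1*f*e*u0*u3*v2^2 + f*e*u1^2*v0*v3 - 1*f*e*u1*u3*v0*v1 - 1*f*e*u2^2*v0*v3 + f*e*u2*u3*v0*v2 - 1*f*d*u0*u1*v1*v2 + f*d*u0*u2*v1^2 - 1*f*d*u0*u2*v3^2 + f*d*u0*u3*v2*v3 + f*d*u1^2*v0*v2 - 1*f*d*u1*u2*v0*v1 + f*d*u2*u3*v0*v3 - 1*f*d*u3^2*v0*v2 + f*a*u0^2*v2^2 + f*a*u0^2*v3^2 - 2*f*a*u0*u2*v0*v2 - 2*f*a*u0*u3*v0*v3 + f*a*u1^2*v2^2 + f*a*u1^2*v3^2 - 2*f*a*u1*u2*v1*v2 - 2*f*a*u1*u3*v1*v3 + f*a*u2^2*v0^2 + f*a*u2^2*v1^2 + f*a*u3^2*v0^2 + f*a*u3^2*v1^2 - 1*f*B*u0^2*v1*v2 + f*B*u0*u1*v0*v2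 + f*B*u0*u2*v0*v1 - 1*f*B*u1*u2*v0^2 + f*B*u1*u2*v3^2 - 1*f*B*u1*u3*v2*v3 - 1*f*B*u2*u3*v1*v3 + f*B*u3^2*v1*v2 - 1*f*C*u0^2*v1*v3 + f*C*u0*u1*v0*v3 + f*C*u0*u3*v0*v1 - 1*f*C*u1*u2*v2*v3 - 1*f*C*u1*u3*v0^2 + f*C*u1*u3*v2^2 + f*C*u2^2*v1*v3 - 1*f*C*u2*u3*v1*v2 + e^2*u0*u1*v2*v3 - 1*e^2*u0*u3*v1*v2 - 1*e^2*u1*u2*v0*v3 + e^2*u2*u3*v0*v1 + e*d*u0*u1*v2^2 - 1*e*d*u0*u1*v3^2 - 1*e*d*u0*u2*v1*v2 + e*d*u0*u3*v1*v3 - 1*e*d*u1*u2*v0*v2 + e*d*u1*u3*v0*v3 + e*d*u2^2*v0*v1 - 1*e*d*u3^2*v0*v1 + e*a*u0^2*v1*v2 - 1*e*a*u0*u1*v0*v2 - 1*e*a*u0*u2*v0*v1 + e*a*u1*u2*v0^2 - 1*e*a*u1*u2*v3^2 + e*a*u1*u3*v2*v3 + e*a*u2*u3*v1*v3 - 1*e*a*u3^2*v1*v2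 - 1*e*B*u0^2*v1^2 - 1*e*B*u0^2*v3^2 + 2*e*B*u0*u1*v0*v1 + 2*e*B*u0*u3*v0*v3 - 1*e*B*u1^2*v0^2 - 1*e*B*u1^2*v2^2 + 2*e*B*u1*u2*v1*v2 - 1*e*B*u2^2*v1^2 - 1*e*B*u2^2*v3^2 + 2*e*B*u2*u3*v2*v3 - 1*e*B*u3^2*v0^2 - 1*e*B*u3^2*v2^2 + e*C*u0^2*v2*v3 - 1*e*C*u0*u2*v0*v3 - 1*e*C*u0*u3*v0*v2 - 1*e*C*u1^2*v2*v3 + e*C*u1*u2*v1*v3 + e*C*u1*u3*v1*v2 + e*C*u2*u3*v0^2 - 1*e*C*u2*u3*v1^2 - 1*d^2*u0*u1*v2*v3 + d^2*u0*u2*v1*v3 + d^2*u1*u3*v0*v2 - 1*d^2*u2*u3*v0*v1 - 1*d*a*u0^2*v1*v3 + d*a*u0*u1*v0*v3 + d*a*u0*u3*v0*v1 - 1*d*a*u1*u2*v2*v3 - 1*d*a*u1*u3*v0^2 + d*a*u1*u3*v2^2 + d*a*u2^2*v1*v3 - 1*d*a*u2*u3*v1*v2 - 1*d*B*u0^2*v2*v3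 + d*B*u0*u2*v0*v3 + d*B*u0*u3*v0*v2 + d*B*u1^2*v2*v3 - 1*d*B*u1*u2*v1*v3 - 1*d*B*u1*u3*v1*v2 - 1*d*B*u2*u3*v0^2 + d*B*u2*u3*v1^2 + d*C*u0^2*v1^2 + d*C*u0^2*v2^2 - 2*d*C*u0*u1*v0*v1 - 2*d*C*u0*u2*v0*v2 + d*C*u1^2*v0^2 + d*C*u1^2*v3^2 - 2*d*C*u1*u3*v1*v3 + d*C*u2^2*v0^2 + d*C*u2^2*v3^2 - 2*d*C*u2*u3*v2*v3 + d*C*u3^2*v1^2 + d*C*u3^2*v2^2 - 1*a^2*u0*u2*v1*v3 + a^2*u0*u3*v1*v2 + a^2*u1*u2*v0*v3 - 1*a^2*u1*u3*v0*v2 + a*B*u0*u1*v1*v3 - 1*a*B*u0*u2*v2*v3 - 1*a*B*u0*u3*v1^2 + a*B*u0*u3*v2^2 - 1*a*B*u1^2*v0*v3 + a*B*u1*u3*v0*v1 + a*B*u2^2*v0*v3 - 1*a*B*u2*u3*v0*v2 - 1*a*C*u0*u1*v1*v2 + a*C*u0*u2*v1^2 - 1*a*C*u0*u2*v3^2 +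 a*C*u0*u3*v2*v3 + a*C*u1^2*v0*v2 - 1*a*C*u1*u2*v0*v1 + a*C*u2*u3*v0*v3 - 1*a*C*u3^2*v0*v2 + B^2*u0*u1*v2*v3 - 1*B^2*u0*u3*v1*v2 - 1*B^2*u1*u2*v0*v3 + B^2*u2*u3*v0*v1 - 1*B*C*u0*u1*v2^2 + B*C*u0*u1*v3^2 + B*C*u0*u2*v1*v2 - 1*B*C*u0*u3*v1*v3 + B*C*u1*u2*v0*v2 - 1*B*C*u1*u3*v0*v3 - 1*B*C*u2^2*v0*v1 + B*C*u3^2*v0*v1 - 1*C^2*u0*u1*v2*v3 + C^2*u0*u2*v1*v3 + C^2*u1*u3*v0*v2 - 1*C^2*u2*u3*v0*v1 = 1) :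
    f = a ∧ e = -B ∧ d = C := by
  have P00 : (a-f)*(a+f) = 0 := by linear_combination (h11 + h22 - h33 - h44)/2
  have P01 : (a-f)*(B-e) = 0 := by linear_combination h23 + h14
  have P02 : (a-f)*(C+d) = 0 := by linear_combination h24 - h13
  have P10 : (B+e)*(a+f) = 0 := by linear_combination h23 - h14
  have P11 : (B+e)*(B-e) = 0 := by linear_combination (h11 + h33 - h22 - h44)/2
  have P12 : (B+e)*(C+d) = 0 := by linear_combination h34 + h12
  have P20 : (C-d)*(a+f) = 0 := by linear_combination h24 + h13
  have P21 : (C-d)*(B-e) = 0 := by linear_combination h34 - h12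
  have P22 : (C-d)*(C+d) = 0 := by linear_combination (h11 + h44 - h22 - h33)/2
  have hbad : ¬(a + f = 0 ∧ B - e = 0 ∧ C + d = 0) := by
    rintro ⟨g1, g2, g3⟩
    have habs : (1:ℝ) = -1 := by
      linear_combination (-1)*hDET - (v0^2+v1^2+v2^2+v3^2)*huu - hvv
        + (u0*v0+u1*v1+u2*v2+u3*v3)*huv + (f*u2*v3 - 1*f*u3*v2 + e*u1*v3 - 1*e*u3*v1 + d*u1*v2 - 1*d*u2*v1 + a*u0*v1 - 1*a*u1*v0 + B*u0*v2 - 1*B*u2*v0 + C*u0*v3 - 1*C*u3*v0)*huMv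
        + (-1*u0^2*v1^2 - 1*u0^2*v2^2 - 1*u0^2*v3^2 + 2*u0*u1*v0*v1 + 2*u0*u2*v0*v2 + 2*u0*u3*v0*v3 - 1*u1^2*v0^2 - 1*u1^2*v2^2 - 1*u1^2*v3^2 + 2*u1*u2*v1*v2 + 2*u1*u3*v1*v3 - 1*u2^2*v0^2 - 1*u2^2*v1^2 - 1*u2^2*v3^2 + 2*u2*u3*v2*v3 - 1*u3^2*v0^2 - 1*u3^2*v1^2 - 1*u3^2*v2^2)*h11 + (-1*f*u0*u2*v1*v3 + f*u0*u3*v1*v2 + f*u1*u2*v0*v3 - 1*f*u1*u3*v0*v2 - 1*f*u2^2*v3^2 + 2*f*u2*u3*v2*v3 - 1*f*u3^2*v2^2 - 1*e*u0*u1*v1*v3 + e*u0*u2*v2*v3 + e*u0*u3*v1^2 - 1*e*u0*u3*v2^2 + e*u1^2*v0*v3 - 2*e*u1*u2*v3^2 - 1*e*u1*u3*v0*v1 + 2*e*u1*u3*v2*v3 - 1*e*u2^2*v0*v3 + e*u2*u3*v0*v2 + 2*e*u2*u3*v1*v3 - 2*e*u3^2*v1*v2 - 1*d*u0*u1*v1*v2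 + d*u0*u2*v1^2 - 1*d*u0*u2*v3^2 + d*u0*u3*v2*v3 + d*u1^2*v0*v2 - 1*d*u1*u2*v0*v1 - 2*d*u1*u2*v2*v3 + 2*d*u1*u3*v2^2 + 2*d*u2^2*v1*v3 + d*u2*u3*v0*v3 - 2*d*u2*u3*v1*v2 - 1*d*u3^2*v0*v2 + a*u0^2*v2^2 + a*u0^2*v3^2 - 2*a*u0*u2*v0*v2 - 1*a*u0*u2*v1*v3 - 2*a*u0*u3*v0*v3 + a*u0*u3*v1*v2 + a*u1^2*v2^2 + a*u1^2*v3^2 + a*u1*u2*v0*v3 - 2*a*u1*u2*v1*v2 - 1*a*u1*u3*v0*v2 - 2*a*u1*u3*v1*v3 + a*u2^2*v0^2 + a*u2^2*v1^2 + a*u2^2*v3^2 - 2*a*u2*u3*v2*v3 + a*u3^2*v0^2 + a*u3^2*v1^2 + a*u3^2*v2^2 - 1*B*u0^2*v1*v2 + B*u0*u1*v0*v2 + B*u0*u2*v0*v1 - 2*B*u0*u2*v2*v3 + 2*B*u0*u3*v2^2 - 1*B*u1*u2*v0^2 + B*u1*u2*v3^2 - 1*B*u1*u3*v2*v3 + 2*B*u2^2*v0*v3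 - 2*B*u2*u3*v0*v2 - 1*B*u2*u3*v1*v3 + B*u3^2*v1*v2 - 1*C*u0^2*v1*v3 + C*u0*u1*v0*v3 - 2*C*u0*u2*v3^2 + C*u0*u3*v0*v1 + 2*C*u0*u3*v2*v3 - 1*C*u1*u2*v2*v3 - 1*C*u1*u3*v0^2 + C*u1*u3*v2^2 + C*u2^2*v1*v3 + 2*C*u2*u3*v0*v3 - 1*C*u2*u3*v1*v2 - 2*C*u3^2*v0*v2)*g1 - (e*u0*u1*v2*v3 - 1*e*u0*u3*v1*v2 - 1*e*u1^2*v3^2 - 1*e*u1*u2*v0*v3 + 2*e*u1*u3*v1*v3 + e*u2*u3*v0*v1 - 1*e*u3^2*v1^2 + d*u0*u1*v2^2 - 1*d*u0*u1*v3^2 - 1*d*u0*u2*v1*v2 + d*u0*u3*v1*v3 - 2*d*u1^2*v2*v3 - 1*d*u1*u2*v0*v2 + 2*d*u1*u2*v1*v3 + d*u1*u3*v0*v3 + 2*d*u1*u3*v1*v2 + d*u2^2*v0*v1 - 2*d*u2*u3*v1^2 - 1*d*u3^2*v0*v1 + a*u0^2*v1*v2 - 1*a*u0*u1*v0*v2 -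 1*a*u0*u1*v1*v3 - 1*a*u0*u2*v0*v1 - 1*a*u0*u2*v2*v3 + a*u0*u3*v1^2 + a*u0*u3*v2^2 + a*u1^2*v0*v3 + a*u1*u2*v0^2 + a*u1*u2*v3^2 - 1*a*u1*u3*v0*v1 - 1*a*u1*u3*v2*v3 + a*u2^2*v0*v3 - 1*a*u2*u3*v0*v2 - 1*a*u2*u3*v1*v3 + a*u3^2*v1*v2 - 1*B*u0^2*v1^2 - 1*B*u0^2*v3^2 + 2*B*u0*u1*v0*v1 - 1*B*u0*u1*v2*v3 + 2*B*u0*u3*v0*v3 + B*u0*u3*v1*v2 - 1*B*u1^2*v0^2 - 1*B*u1^2*v2^2 - 1*B*u1^2*v3^2 + B*u1*u2*v0*v3 + 2*B*u1*u2*v1*v2 + 2*B*u1*u3*v1*v3 - 1*B*u2^2*v1^2 - 1*B*u2^2*v3^2 - 1*B*u2*u3*v0*v1 + 2*B*u2*u3*v2*v3 - 1*B*u3^2*v0^2 - 1*B*u3^2*v1^2 - 1*B*u3^2*v2^2 + C*u0^2*v2*v3 - 2*C*u0*u1*v3^2 - 1*C*u0*u2*v0*v3 - 1*C*u0*u3*v0*v2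 + 2*C*u0*u3*v1*v3 - 1*C*u1^2*v2*v3 + C*u1*u2*v1*v3 + 2*C*u1*u3*v0*v3 + C*u1*u3*v1*v2 + C*u2*u3*v0^2 - 1*C*u2*u3*v1^2 - 2*C*u3^2*v0*v1)*g2 + (-1*d*u0*u1*v2*v3 + d*u0*u2*v1*v3 - 1*d*u1^2*v2^2 + 2*d*u1*u2*v1*v2 + d*u1*u3*v0*v2 - 1*d*u2^2*v1^2 - 1*d*u2*u3*v0*v1 - 1*a*u0^2*v1*v3 + a*u0*u1*v0*v3 - 1*a*u0*u1*v1*v2 + a*u0*u2*v1^2 + a*u0*u2*v3^2 + a*u0*u3*v0*v1 - 1*a*u0*u3*v2*v3 + a*u1^2*v0*v2 - 1*a*u1*u2*v0*v1 + a*u1*u2*v2*v3 - 1*a*u1*u3*v0^2 - 1*a*u1*u3*v2^2 - 1*a*u2^2*v1*v3 - 1*a*u2*u3*v0*v3 + a*u2*u3*v1*v2 + a*u3^2*v0*v2 - 1*B*u0^2*v2*v3 - 1*B*u0*u1*v2^2 - 1*B*u0*u1*v3^2 + B*u0*u2*v0*v3 + B*u0*u2*v1*v2 + B*u0*u3*v0*v2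 + B*u0*u3*v1*v3 - 1*B*u1^2*v2*v3 + B*u1*u2*v0*v2 + B*u1*u2*v1*v3 + B*u1*u3*v0*v3 + B*u1*u3*v1*v2 - 1*B*u2^2*v0*v1 - 1*B*u2*u3*v0^2 - 1*B*u2*u3*v1^2 - 1*B*u3^2*v0*v1 + C*u0^2*v1^2 + C*u0^2*v2^2 - 2*C*u0*u1*v0*v1 - 1*C*u0*u1*v2*v3 - 2*C*u0*u2*v0*v2 + C*u0*u2*v1*v3 + C*u1^2*v0^2 + C*u1^2*v2^2 + C*u1^2*v3^2 - 2*C*u1*u2*v1*v2 + C*u1*u3*v0*v2 - 2*C*u1*u3*v1*v3 + C*u2^2*v0^2 + C*u2^2*v1^2 + C*u2^2*v3^2 - 1*C*u2*u3*v0*v1 - 2*C*u2*u3*v2*v3 + C*u3^2*v1^2 + C*u3^2*v2^2)*g3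
    norm_num at habs
  by_cases H0 : a - f = 0
  · by_cases H1 : B + e = 0
    · by_cases H2 : C - d = 0
      · exact ⟨by linarith, by linarith, by linarith⟩
      · exact absurd ⟨(mul_eq_zero.mp P20).resolve_left H2,
          (mul_eq_zero.mp P21).resolve_left H2,
          (mul_eq_zero.mp P22).resolve_left H2⟩ hbad
    · exact absurd ⟨(mul_eq_zero.mp P10).resolve_left H1,
        (mul_eq_zero.mp P11).resolve_left H1,
        (mul_eq_zero.mp P12).resolve_left H1⟩ hbad
  · exact absurd ⟨(mul_eq_zero.mp P00).resolve_left H0,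
      (mul_eq_zero.mp P01).resolve_left H0,
      (mul_eq_zero.mp P02).resolve_left H0⟩ hbad

open Finset in
private theorem my_det_fin_four (A : Matrix (Fin 4) (Fin 4) ℝ) : A.det =
    A 0 0 * (A 1 1 * (A 2 2 * A 3 3 - A 2 3 * A 3 2) - A 1 2 * (A 2 1 * A 3 3 - A 2 3 * A 3 1) + A 1 3 * (A 2 1 * A 3 2 - A 2 2 * A 3 1))
  - A 0 1 * (A 1 0 * (A 2 2 * A 3 3 - A 2 3 * A 3 2) - A 1 2 * (A 2 0 * A 3 3 - A 2 3 * A 3 0) + A 1 3 * (A 2 0 * A 3 2 - A 2 2 * A 3 0))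
  + A 0 2 * (A 1 0 * (A 2 1 * A 3 3 - A 2 3 * A 3 1) - A 1 1 * (A 2 0 * A 3 3 - A 2 3 * A 3 0) + A 1 3 * (A 2 0 * A 3 1 - A 2 1 * A 3 0))
  - A 0 3 * (A 1 0 * (A 2 1 * A 3 2 - A 2 2 * A 3 1) - A 1 1 * (A 2 0 * A 3 2 - A 2 2 * A 3 0) + A 1 2 * (A 2 0 * A 3 1 - A 2 1 * A 3 0)) := by
  simp only [Matrix.det_succ_row_zero, ← Nat.not_even_iff_odd, Matrix.submatrix_apply,
    Fin.succ_zero_eq_one, Matrix.submatrix_submatrix, Matrix.det_unique, Fin.default_eq_zero,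
    Function.comp_apply, Fin.succ_one_eq_two, Fin.sum_univ_succ, Fin.val_zero, Fin.zero_succAbove,
    Finset.univ_unique, Fin.val_succ, Fin.val_eq_zero, Fin.succ_succAbove_zero,
    Finset.sum_singleton, Fin.succ_succAbove_one, Even.add_self]
  simp only [show (Fin.succ 2 : Fin 4) = 3 from rfl,
    show (Fin.succAbove (2:Fin 4) 2 : Fin 4) = 3 from rfl,
    show (Fin.succAbove (1:Fin 4) 2 : Fin 4) = 3 from rfl,
    show (Fin.castSucc 2 : Fin 4) = 2 from rfl,
    show (Fin.succAbove (3:Fin 4) 2 : Fin 4) = 2 from rfl]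
  ring

set_option maxHeartbeats 4000000 in
/-- The `J₊`-invariant part of the `2`-form `Ψ₋`, namely
`(1/2)(Ψ₋(·,·) + Ψ₋(J₊·,J₊·))`, equals `(1-p²)·F₊`. -/
theorem stmt5 {V : Type*} [NormedAddCommGroup V] [InnerProductSpace ℝ V]
    (hdim : Module.finrank ℝ V = 4) (o : Orientation ℝ V (Fin 4))
    (Jp Jm : V →ₗ[ℝ] V)
    (hJpsq : Jp ∘ₗ Jp = -LinearMap.id) (hJmsq : Jm ∘ₗ Jm = -LinearMap.id)
    (hJpg : ∀ x y : V, ⟪Jp x, Jp y⟫ = ⟪x, y⟫)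
    (hJmg : ∀ x y : V, ⟪Jm x, Jm y⟫ = ⟪x, y⟫)
    (hJpo : InducesOrientation o Jp) (hJmo : InducesOrientation o Jm)
    (p : ℝ) (hp : p = -(1/4) * LinearMap.trace ℝ V (Jp ∘ₗ Jm))
    (Fp Φ Ψm : V → V → ℝ)
    (hFp : ∀ x y, Fp x y = ⟪Jp x, y⟫)
    (hΦ : ∀ x y, Φ x y = (1/2) * ⟪(Jp ∘ₗ Jm - Jm ∘ₗ Jp) x, y⟫)
    (hΨm : ∀ x y, Ψm x y = -Φ (Jm x) y) :
    ∀ x y : V, (1/2) * (Ψm x y + Ψm (Jp x) (Jp y)) = (1 - p ^ 2) * Fp x y := by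
  haveI : Fact (Module.finrank ℝ V = 4) := ⟨hdim⟩
  obtain ⟨b, hbo, hb01, hb23⟩ := hJpo
  obtain ⟨cb, hco, hc01, hc23⟩ := hJmo
  have hJpp : ∀ x : V, Jp (Jp x) = -x := fun x => by
    simpa using LinearMap.ext_iff.mp hJpsq x
  have hJmm : ∀ x : V, Jm (Jm x) = -x := fun x => by
    simpa using LinearMap.ext_iff.mp hJmsq x
  have hskp : ∀ x y : V, ⟪x, Jp y⟫ = -⟪Jp x, y⟫ := by
    intro x y
    have h := hJpg x (Jp y)
    rw [hJpp y, inner_neg_right] at h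
    linarith
  have hskm : ∀ x y : V, ⟪x, Jm y⟫ = -⟪Jm x, y⟫ := by
    intro x y
    have h := hJmg x (Jm y)
    rw [hJmm y, inner_neg_right] at h
    linarith
  have hIP : ∀ x y : V, ⟪x, y⟫ = ∑ k : Fin 4, ⟪b k, x⟫ * ⟪b k, y⟫ := by
    intro x y
    rw [← b.repr.inner_map_map x y]
    simp only [PiLp.inner_apply, RCLike.inner_apply, conj_trivial,
      OrthonormalBasis.repr_apply_apply]
    exact Finset.sum_congr rfl fun k _ => mul_comm _ _
  have hexp : ∀ x : V, x = ∑ k : Fin 4, ⟪b k, x⟫ • b k := by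
    intro x
    conv_lhs => rw [← b.sum_repr x]
    simp [OrthonormalBasis.repr_apply_apply]
  have hbij : ∀ i j : Fin 4, ⟪b i, b j⟫ = if i = j then 1 else 0 :=
    orthonormal_iff_ite.mp b.orthonormal
  have hcij : ∀ i j : Fin 4, ⟪cb i, cb j⟫ = if i = j then 1 else 0 :=
    orthonormal_iff_ite.mp cb.orthonormal
  have hb10 : Jp (b 1) = -b 0 := by rw [← hb01, hJpp]
  have hb32 : Jp (b 3) = -b 2 := by rw [← hb23, hJpp]
  have hmswap : ∀ i j : Fin 4, ⟪b i, Jm (b j)⟫ = -⟪b j, Jm (b i)⟫ := by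
    intro i j
    rw [hskm, real_inner_comm]
  have hmdiag : ∀ i : Fin 4, ⟪b i, Jm (b i)⟫ = 0 := fun i => by
    have := hmswap i i; linarith
  have hms10 := hmswap 1 0
  have hms20 := hmswap 2 0
  have hms30 := hmswap 3 0
  have hms21 := hmswap 2 1
  have hms31 := hmswap 3 1
  have hms32 := hmswap 3 2
  have horthR : ∀ i j : Fin 4,
      (∑ k : Fin 4, ⟪b k, Jm (b i)⟫ * ⟪b k, Jm (b j)⟫) = if i = j then 1 else 0 := by
    intro i j
    rw [← hIP, hJmg]
    exact hbij i j
  have H0 := horthR 0 0; rw [if_pos rfl] at H0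
  have H1 := horthR 1 1; rw [if_pos rfl] at H1
  have H2 := horthR 2 2; rw [if_pos rfl] at H2
  have H3 := horthR 3 3; rw [if_pos rfl] at H3
  have H01 := horthR 0 1; rw [if_neg (by decide)] at H01
  have H02 := horthR 0 2; rw [if_neg (by decide)] at H02
  have H03 := horthR 0 3; rw [if_neg (by decide)] at H03
  have H12 := horthR 1 2; rw [if_neg (by decide)] at H12
  have H13 := horthR 1 3; rw [if_neg (by decide)] at H13
  have H23 := horthR 2 3; rw [if_neg (by decide)] at H23
  simp only [Fin.sum_univ_four, hmdiag, hms10, hms20, hms30, hms21, hms31, hms32]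
    at H0 H1 H2 H3 H01 H02 H03 H12 H13 H23
  -- expansion of inner products against Jm images
  have hxc : ∀ (x : V) (i : Fin 4), ⟪b i, Jm x⟫ = ∑ k : Fin 4, ⟪b k, x⟫ * ⟪b i, Jm (b k)⟫ := by
    intro x i
    conv_lhs => rw [hexp x]
    rw [map_sum, inner_sum]
    refine Finset.sum_congr rfl fun k _ => ?_
    rw [map_smul, real_inner_smul_right]
  have hcb1 : ∀ i : Fin 4, ⟪b i, cb 1⟫ = ∑ k : Fin 4, ⟪b k, cb 0⟫ * ⟪b i, Jm (b k)⟫ := by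
    intro i; rw [← hc01]; exact hxc (cb 0) i
  have hcb3 : ∀ i : Fin 4, ⟪b i, cb 3⟫ = ∑ k : Fin 4, ⟪b k, cb 2⟫ * ⟪b i, Jm (b k)⟫ := by
    intro i; rw [← hc23]; exact hxc (cb 2) i
  -- orthonormality of c in coordinates
  have HU : (∑ k : Fin 4, ⟪b k, cb 0⟫ * ⟪b k, cb 0⟫) = 1 := by
    rw [← hIP]
    have := hcij 0 0; rwa [if_pos rfl] at this
  have HV : (∑ k : Fin 4, ⟪b k, cb 2⟫ * ⟪b k, cb 2⟫) = 1 := by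
    rw [← hIP]
    have := hcij 2 2; rwa [if_pos rfl] at this
  have HX : (∑ k : Fin 4, ⟪b k, cb 0⟫ * ⟪b k, cb 2⟫) = 0 := by
    rw [← hIP]
    have := hcij 0 2; rwa [if_neg (by decide)] at this
  have HY : (∑ k : Fin 4, ⟪b k, cb 0⟫ * ⟪b k, cb 3⟫) = 0 := by
    rw [← hIP]
    have := hcij 0 3; rwa [if_neg (by decide)] at this
  simp only [hcb3, Fin.sum_univ_four, hmdiag, hms10, hms20, hms30, hms21, hms31, hms32] at HY
  simp only [Fin.sum_univ_four] at HU HV HX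
  -- the determinant condition from the common orientation
  have hdetM : (Matrix.of fun i j => ⟪b i, cb j⟫ : Matrix (Fin 4) (Fin 4) ℝ).det = 1 := by
    have h1 : o.volumeForm = b.toBasis.det := o.volumeForm_robust b hbo
    have h2 : o.volumeForm = cb.toBasis.det := o.volumeForm_robust cb hco
    have h3 : b.toBasis.det ⇑cb = 1 := by
      rw [← h1, h2]
      have hh : ⇑cb = ⇑cb.toBasis := by simp
      rw [hh, Module.Basis.det_self]
    rw [Module.Basis.det_apply] at h3
    rw [← h3]
    congr 1
    ext i j
    simp [Module.Basis.toMatrix_apply, OrthonormalBasis.coe_toBasis_repr_apply,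
      OrthonormalBasis.repr_apply_apply]
  rw [my_det_fin_four] at hdetM
  simp only [Matrix.of_apply] at hdetM
  simp only [hcb1, hcb3, Fin.sum_univ_four, hmdiag, hms10, hms20, hms30, hms21, hms31, hms32]
    at hdetM
  obtain ⟨hfa, heB, hdC⟩ :=
    aux_selfdual (⟪b 0, Jm (b 1)⟫) (⟪b 0, Jm (b 2)⟫) (⟪b 0, Jm (b 3)⟫) (⟪b 1, Jm (b 2)⟫)
      (⟪b 1, Jm (b 3)⟫) (⟪b 2, Jm (b 3)⟫) (⟪b 0, cb 0⟫) (⟪b 1, cb 0⟫) (⟪b 2, cb 0⟫)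
      (⟪b 3, cb 0⟫) (⟪b 0, cb 2⟫) (⟪b 1, cb 2⟫) (⟪b 2, cb 2⟫) (⟪b 3, cb 2⟫)
      (by linear_combination H0) (by linear_combination H1) (by linear_combination H2)
      (by linear_combination H3) (by linear_combination H01) (by linear_combination H02)
      (by linear_combination H03) (by linear_combination H12) (by linear_combination H13)
      (by linear_combination H23) (by linear_combination HU) (by linear_combination HV)
      (by linear_combination HX) (by linear_combination HY) (by linear_combination hdetM)
  set aa := ⟪b 0, Jm (b 1)⟫ with haa
  set bb := ⟪b 0, Jm (b 2)⟫ with hbb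
  set cc := ⟪b 0, Jm (b 3)⟫ with hcc
  -- expansions of Jm on the basis, in self-dual form
  have hJmb : ∀ j : Fin 4, Jm (b j) = ∑ k : Fin 4, ⟪b k, Jm (b j)⟫ • b k := fun j => hexp _
  have hJ0 : Jm (b 0) = -(aa • b 1) - bb • b 2
      - cc • b 3 := by
    have h := hJmb 0
    rw [Fin.sum_univ_four, hmdiag 0, hms10, hms20, hms30] at h
    conv_lhs => rw [h]
    module
  have hJ1 : Jm (b 1) = aa • b 0 - cc • b 2
      + bb • b 3 := by
    have h := hJmb 1
    rw [Fin.sum_univ_four, hmdiag 1, hms21, hms31, hdC, heB] at h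
    conv_lhs => rw [h]
    module
  have hJ2 : Jm (b 2) = bb • b 0 + cc • b 1
      - aa • b 3 := by
    have h := hJmb 2
    rw [Fin.sum_univ_four, hmdiag 2, hms32, hdC, hfa] at h
    conv_lhs => rw [h]
    module
  have hJ3 : Jm (b 3) = cc • b 0 - bb • b 1
      + aa • b 2 := by
    have h := hJmb 3
    rw [Fin.sum_univ_four, hmdiag 3, heB, hfa] at h
    conv_lhs => rw [h]
    module
  -- the trace, hence p
  have htr : LinearMap.trace ℝ V (Jp ∘ₗ Jm) = ∑ i : Fin 4, ⟪b i, Jp (Jm (b i))⟫ := by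
    rw [LinearMap.trace_eq_matrix_trace ℝ b.toBasis, Matrix.trace]
    simp [LinearMap.toMatrix_apply, Matrix.diag, OrthonormalBasis.coe_toBasis_repr_apply,
      OrthonormalBasis.repr_apply_apply]
  have hd0 : ⟪b 0, Jp (Jm (b 0))⟫ = aa := by
    rw [hJ0]
    simp [hb01, hb10, hb23, hb32, inner_add_right, inner_sub_right, inner_smul_right,
      inner_neg_right, hbij]
  have hd1 : ⟪b 1, Jp (Jm (b 1))⟫ = aa := by
    rw [hJ1]
    simp [hb01, hb10, hb23, hb32, inner_add_right, inner_sub_right, inner_smul_right,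
      inner_neg_right, hbij]
  have hd2 : ⟪b 2, Jp (Jm (b 2))⟫ = aa := by
    rw [hJ2]
    simp [hb01, hb10, hb23, hb32, inner_add_right, inner_sub_right, inner_smul_right,
      inner_neg_right, hbij]
  have hd3 : ⟪b 3, Jp (Jm (b 3))⟫ = aa := by
    rw [hJ3]
    simp [hb01, hb10, hb23, hb32, inner_add_right, inner_sub_right, inner_smul_right,
      inner_neg_right, hbij]
  have hpA : p = -aa := by
    rw [hp, htr, Fin.sum_univ_four, hd0, hd1, hd2, hd3]; ring
  -- the anticommutator identity
  have hL : Jp ∘ₗ Jm + Jm ∘ₗ Jp = (2 * aa) • LinearMap.id := by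
    apply b.toBasis.ext
    intro i
    fin_cases i <;>
      simp only [OrthonormalBasis.coe_toBasis, LinearMap.add_apply, LinearMap.comp_apply,
        LinearMap.smul_apply, LinearMap.id_apply, Fin.zero_eta, Fin.mk_one, Fin.isValue,
        show (⟨2, by omega⟩ : Fin 4) = 2 from rfl, show (⟨3, by omega⟩ : Fin 4) = 3 from rfl]
    all_goals
      simp only [hJ0, hJ1, hJ2, hJ3, map_add, map_sub, map_neg, map_smul, hb01, hb10, hb23, hb32]
      module
  have hac : ∀ x : V, Jp (Jm x) + Jm (Jp x) = (2 * aa) • x := by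
    intro x
    have h := LinearMap.ext_iff.mp hL x
    simpa using h
  -- final computation
  have hPsi : ∀ z w : V, Ψm z w = ⟪Jp z, w⟫ + aa * ⟪Jm z, w⟫ := by
    intro z w
    rw [hΨm, hΦ]
    have h := hac (Jm z)
    rw [hJmm z, map_neg] at h
    have h1 : Jm (Jp (Jm z)) = (2 * aa) • Jm z + Jp z := by
      linear_combination (norm := module) h
    rw [LinearMap.sub_apply, LinearMap.comp_apply, LinearMap.comp_apply, hJmm z, map_neg, h1]
    rw [inner_sub_left, inner_neg_left, inner_add_left, real_inner_smul_left]
    ring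
  intro x y
  rw [hPsi x y, hPsi (Jp x) (Jp y), hFp]
  have e1 : ⟪Jp (Jp x), Jp y⟫ = ⟪Jp x, y⟫ := by
    rw [hJpp x, inner_neg_left, hskp x y]; ring
  have e2 : ⟪Jm (Jp x), Jp y⟫ = -2 * aa * ⟪Jp x, y⟫ - ⟪Jm x, y⟫ := by
    have h := hac x
    have h3 : Jm (Jp x) = (2 * aa) • x - Jp (Jm x) := by
      linear_combination (norm := module) h
    rw [h3, inner_sub_left, real_inner_smul_left, hskp x y, hJpg]
    ring
  rw [e1, e2, hpA]
  ring
end
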